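/- arXiv:0903.4287 — 4 statements merged into one kernel-verified Lean document; each statement's English description precedes it below -/
import Mathlib

section
/- Let E be a real Banach space and A a unital real Banach algebra. Let τ : ℝ × E → A be twice continuously differentiable with τ(0,x) = 1 for all x and τ(t,x) invertible for all (t,x); set f(x) := ∂_t τ(t,x)|_{t=0}. Let Ā : E → L(E,A) be any map. Then for each x ∈ E and u ∈ E, the curve t ↦ τ(t,x)⁻¹ * (Ā(x)u) * τ(t,x) + τ(t,x)⁻¹ * (D_x τ(t,·)(x)u) is differentiable at t = 0 with derivative Df(x)u + (Ā(x)u) * f(x) − f(x) * (Ā(x)u), i.e. equal to the covariant differential (d^{Ā} f)(x)(u) of f with respect to Ā (with bracket the commutator). -/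
/-- **Derivative of the gauge-transformed connection:**
`(d/dt)|₀ ψₜ*𝒜 = d^𝒜 (σ⁻¹(ψ̇₀))` in a local trivialization. For a smooth family
`τ : ℝ × E → A` of invertible elements with `τ(0,·) = 1`, and `f := ∂ₜ τ|₀`, the
curve `t ↦ τₜ⁻¹ (Ā u) τₜ + τₜ⁻¹ D_x τₜ(u)` has derivative at `t = 0` equal to the
covariant differential `(d^Ā f)(x)(u) = Df(x)u + (Ā x u) f x − f x (Ā x u)`. -/
theorem hasDerivAt_gauge_transformed_connection
    {E : Type*} [NormedAddCommGroup E] [NormedSpace ℝ E]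
    {A : Type*} [NormedRing A] [NormedAlgebra ℝ A] [CompleteSpace A]
    (τ : ℝ × E → A) (hτ : ContDiff ℝ 2 τ)
    (hτ0 : ∀ x : E, τ (0, x) = 1) (hτunit : ∀ p : ℝ × E, IsUnit (τ p))
    (Abar : E → (E →L[ℝ] A))
    (f : E → A) (hf : ∀ x, f x = deriv (fun t : ℝ => τ (t, x)) 0) :
    ∀ (x u : E),
      HasDerivAt
        (fun t : ℝ => Ring.inverse (τ (t, x)) * (Abar x u) * τ (t, x)
          + Ring.inverse (τ (t, x)) * (fderiv ℝ (fun y => τ (t, y)) x u))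
        (fderiv ℝ f x u + (Abar x u) * f x - f x * (Abar x u)) 0 := by
  intro x u
  set F : ℝ × E → (ℝ × E →L[ℝ] A) := fderiv ℝ τ with hFdef
  have hτ1 : ContDiff ℝ 1 τ := hτ.of_le (by norm_num)
  have hd : ∀ p, HasFDerivAt τ (F p) p := fun p =>
    (hτ1.differentiable one_ne_zero p).hasFDerivAt
  have hF1 : ContDiff ℝ 1 F := hτ.fderiv_right (le_refl 2)
  set F' : (ℝ × E) →L[ℝ] ((ℝ × E) →L[ℝ] A) := fderiv ℝ F (0, x) with hF'def
  have hF' : HasFDerivAt F F' (0, x) := (hF1.differentiable one_ne_zero _).hasFDerivAt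
  have hsymm : ∀ v w, F' v w = F' w v := second_derivative_symmetric hd hF'
  -- derivative of t ↦ τ (t, y)
  have hcurve : ∀ (t : ℝ) (y : E),
      HasDerivAt (fun s : ℝ => τ (s, y)) (F (t, y) (1, 0)) t := fun t y =>
    (hd (t, y)).comp_hasDerivAt t (HasDerivAt.prodMk (hasDerivAt_id t) (hasDerivAt_const t y))
  have hfx : ∀ y, f y = F (0, y) (1, 0) := fun y => by
    rw [hf]; exact (hcurve 0 y).deriv
  -- spatial derivative
  have hspace : ∀ (t : ℝ) (y : E),
      HasFDerivAt (fun z : E => τ (t, z))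
        ((F (t, y)).comp ((0 : E →L[ℝ] ℝ).prod (ContinuousLinearMap.id ℝ E))) y := by
    intro t y
    exact (hd (t, y)).comp y (HasFDerivAt.prodMk (hasFDerivAt_const t y) (hasFDerivAt_id y))
  have hgx : ∀ t : ℝ, fderiv ℝ (fun y => τ (t, y)) x u = F (t, x) (0, u) := fun t => by
    rw [(hspace t x).fderiv]; rfl
  -- f x formula and τ at 0
  have hτ0x : τ (0, x) = 1 := hτ0 x
  have hinv1 : Ring.inverse (τ (0, x)) = 1 := by rw [hτ0x, Ring.inverse_one]
  -- derivative of the inverse curve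
  obtain ⟨w, hw⟩ := hτunit (0, x)
  have hw1 : (w : A) = 1 := hw.trans hτ0x
  have hwinv : ((w⁻¹ : Aˣ) : A) = 1 := by
    have : w = 1 := Units.ext (by simpa using hw1)
    simp [this]
  have hinv : HasDerivAt (fun t : ℝ => Ring.inverse (τ (t, x))) (-(f x)) 0 := by
    have h1 : HasFDerivAt Ring.inverse
        (-(ContinuousLinearMap.mulLeftRight ℝ A ↑w⁻¹ ↑w⁻¹)) (τ (0, x)) := by
      rw [← hw]; exact hasFDerivAt_ringInverse w
    have h2 := h1.comp_hasDerivAt 0 (hcurve 0 x)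
    have : (-(ContinuousLinearMap.mulLeftRight ℝ A ↑w⁻¹ ↑w⁻¹)) (F (0, x) (1, 0)) = -(f x) := by
      simp [ContinuousLinearMap.mulLeftRight_apply, hwinv, hfx]
    rwa [this] at h2
  -- first summand
  have hA : HasDerivAt (fun t : ℝ => Ring.inverse (τ (t, x)) * (Abar x u) * τ (t, x))
      (Abar x u * f x - f x * Abar x u) 0 := by
    have h1 := (hinv.mul_const (Abar x u)).mul (hcurve 0 x)
    have heq : (-(f x)) * Abar x u * τ (0, x)
        + Ring.inverse (τ (0, x)) * Abar x u * F (0, x) (1, 0)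
        = Abar x u * f x - f x * Abar x u := by
      rw [hinv1, hτ0x, ← hfx]; noncomm_ring
    rwa [heq] at h1
  -- second summand: t ↦ inverse τ * F (t,x) (0,u)
  have hg : HasDerivAt (fun t : ℝ => F (t, x) (0, u)) (F' (1, 0) (0, u)) 0 := by
    have hB : HasDerivAt (fun t : ℝ => F (t, x)) (F' (1, 0)) 0 :=
      hF'.comp_hasDerivAt 0 (HasDerivAt.prodMk (hasDerivAt_id 0) (hasDerivAt_const 0 x))
    have := hB.clm_apply (hasDerivAt_const 0 ((0 : ℝ), u))
    simpa using this
  have hg0 : F (0, x) (0, u) = 0 := by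
    rw [← hgx 0]
    have : (fun y : E => τ (0, y)) = fun _ => (1 : A) := funext hτ0
    rw [this, fderiv_fun_const]
    simp
  have hB2 : HasDerivAt (fun t : ℝ => Ring.inverse (τ (t, x)) * (F (t, x) (0, u)))
      (F' (1, 0) (0, u)) 0 := by
    have h1 := hinv.mul hg
    have heq : (-(f x)) * (F (0, x) (0, u)) + Ring.inverse (τ (0, x)) * (F' (1, 0) (0, u))
        = F' (1, 0) (0, u) := by rw [hg0, hinv1]; simp
    rwa [heq] at h1
  -- fderiv f x u
  have hfd : HasFDerivAt f (F'.flip (1, 0) |>.comp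
      ((0 : E →L[ℝ] ℝ).prod (ContinuousLinearMap.id ℝ E))) x := by
    have hι : HasFDerivAt (fun y : E => ((0 : ℝ), y))
        ((0 : E →L[ℝ] ℝ).prod (ContinuousLinearMap.id ℝ E)) x :=
      HasFDerivAt.prodMk (hasFDerivAt_const (0 : ℝ) x) (hasFDerivAt_id x)
    have hB : HasFDerivAt (fun y : E => F (0, y))
        (F'.comp ((0 : E →L[ℝ] ℝ).prod (ContinuousLinearMap.id ℝ E))) x := hF'.comp x hι
    have h2 := hB.clm_apply (hasFDerivAt_const ((1 : ℝ), (0 : E)) x)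
    have hfn : f = fun y => F (0, y) (1, 0) := funext hfx
    rw [hfn]
    convert h2 using 1
    · rfl
    ext v
    simp
  have hfdu : fderiv ℝ f x u = F' (1, 0) (0, u) := by
    rw [hfd.fderiv]
    simpa using (hsymm (0, u) (1, 0))
  -- combine
  have hsum := hA.add hB2
  have hfin : (Abar x u * f x - f x * Abar x u) + F' (1, 0) (0, u)
      = fderiv ℝ f x u + Abar x u * f x - f x * Abar x u := by
    rw [hfdu]; abel
  have := hfin ▸ hsum
  refine this.congr_of_eventuallyEq ?_
  filter_upwards with t
  rw [hgx t]; rfl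
end

section
/- Let E be a real Banach space and A a unital real Banach algebra. Let v, w : E → E and θ, ω : E → A be differentiable maps. Define vector fields X, Y on the Banach space E × A by X(x,g) := (v(x), θ(x) * g) and Y(x,g) := (w(x), ω(x) * g), and let the Jacobi–Lie bracket be [X,Y](p) := DY(p)(X(p)) − DX(p)(Y(p)). Then for all (x,g) ∈ E × A: −[X,Y](x,g) = ( Dv(x)(w(x)) − Dw(x)(v(x)), ( Dθ(x)(w(x)) − Dω(x)(v(x)) + θ(x)*ω(x) − ω(x)*θ(x) ) * g ). -/
theorem aux_fderiv_semidirect {E : Type*} [NormedAddCommGroup E] [NormedSpace ℝ E]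
    {A : Type*} [NormedRing A] [NormedAlgebra ℝ A]
    (v : E → E) (θ : E → A) (hv : Differentiable ℝ v) (hθ : Differentiable ℝ θ)
    (x : E) (g : A) (a : E) (b : A) :
    fderiv ℝ (fun p : E × A => (v p.1, θ p.1 * p.2)) (x, g) (a, b)
      = (fderiv ℝ v x a, fderiv ℝ θ x a * g + θ x * b) := by
  have h1 : HasFDerivAt (fun p : E × A => v p.1)
      ((fderiv ℝ v x).comp (ContinuousLinearMap.fst ℝ E A)) (x, g) :=
    ((hv x).hasFDerivAt).comp _ (hasFDerivAt_fst)
  have h2 : HasFDerivAt (fun p : E × A => θ p.1)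
      ((fderiv ℝ θ x).comp (ContinuousLinearMap.fst ℝ E A)) (x, g) :=
    ((hθ x).hasFDerivAt).comp _ (hasFDerivAt_fst)
  have h3 : HasFDerivAt (fun p : E × A => p.2) (ContinuousLinearMap.snd ℝ E A) (x, g) :=
    hasFDerivAt_snd
  have h : HasFDerivAt (fun p : E × A => (v p.1, θ p.1 * p.2)) _ (x, g) := h1.prodMk (h2.mul' h3)
  rw [h.fderiv]
  simp [ContinuousLinearMap.smulRight_apply, smul_eq_mul, add_comm]

/-- **Lie bracket on the automorphism algebra of a trivial bundle (local form):**
for right-invariant vector fields `X(x,g) = (v x, θ x · g)` and `Y(x,g) = (w x, ω x · g)`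
on `E × A`, the (left) Lie bracket, i.e. the negative of the Jacobi–Lie bracket
`[X,Y](p) = DY(p)(X p) − DX(p)(Y p)`, is given by
`([v,w]_L, (dθ(w) − dω(v) + [θ,ω]) · g)`. -/
theorem left_lie_bracket_semidirect_local
    {E : Type*} [NormedAddCommGroup E] [NormedSpace ℝ E]
    {A : Type*} [NormedRing A] [NormedAlgebra ℝ A]
    (v w : E → E) (θ ω : E → A)
    (hv : Differentiable ℝ v) (hw : Differentiable ℝ w)
    (hθ : Differentiable ℝ θ) (hω : Differentiable ℝ ω)
    (X Y : E × A → E × A)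
    (hX : ∀ x g, X (x, g) = (v x, θ x * g))
    (hY : ∀ x g, Y (x, g) = (w x, ω x * g)) :
    ∀ (x : E) (g : A),
      -(fderiv ℝ Y (x, g) (X (x, g)) - fderiv ℝ X (x, g) (Y (x, g)))
        = (fderiv ℝ v x (w x) - fderiv ℝ w x (v x),
           (fderiv ℝ θ x (w x) - fderiv ℝ ω x (v x) + θ x * ω x - ω x * θ x) * g) := by
  intro x g
  have hXe : X = fun p : E × A => (v p.1, θ p.1 * p.2) := funext fun p => hX p.1 p.2
  have hYe : Y = fun p : E × A => (w p.1, ω p.1 * p.2) := funext fun p => hY p.1 p.2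
  subst hXe hYe
  rw [aux_fderiv_semidirect v θ hv hθ x g (w x) (ω x * g),
      aux_fderiv_semidirect w ω hw hω x g (v x) (θ x * g)]
  ext
  · simp
  · simp [mul_assoc, add_mul, sub_mul]
    abel
end

section
/- Let ℍ be the real quaternions, S³ := {q ∈ ℍ : ‖q‖ = 1} the unit sphere, k ∈ ℍ the quaternion imaginary unit with components (0,0,0,1), and Γ := {z ∈ ℍ : ∃ x y : ℝ, z = x + y·k ∧ x² + y² = 1} the circle subgroup. Define the Hopf map π : S³ → ℍ by π(q) := q * k * (star q), where star is quaternion conjugation. Then there is no homeomorphism φ : S³ → S³ such that (i) φ(q * z) = φ(q) * z for all q ∈ S³ and z ∈ Γ, and (ii) π(φ(q)) = −π(q) for all q ∈ S³. -/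
open Quaternion

/-- The quaternion imaginary unit `k`, with components `(0, 0, 0, 1)`. -/
def quatK : Quaternion ℝ := ⟨0, 0, 0, 1⟩

/-- The circle subgroup `Γ = {x + y·k : x² + y² = 1}` of the unit quaternions. -/
def circleGamma : Set (Quaternion ℝ) :=
  {z | ∃ x y : ℝ, z = (x : Quaternion ℝ) + y • quatK ∧ x ^ 2 + y ^ 2 = 1}

/-- The Hopf map `π(q) = q * k * q̄`. -/
noncomputable def hopfMap (q : Quaternion ℝ) : Quaternion ℝ := q * quatK * star q

section AnalyticAux

lemma endpoints_eq_of_int (f : ℝ → ℝ) (hf : ContinuousOn f (Set.Icc 0 1))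
    (h : ∀ t ∈ Set.Icc (0:ℝ) 1, ∃ m : ℤ, f t = 2 * Real.pi * m) : f 1 = f 0 := by
  obtain ⟨m0, hm0⟩ := h 0 (by constructor <;> norm_num)
  obtain ⟨m1, hm1⟩ := h 1 (by constructor <;> norm_num)
  have pipos := Real.pi_pos
  by_contra hne
  have key : ∃ c ∈ Set.Icc (0:ℝ) 1, ∃ mo : ℤ, f c = 2 * Real.pi * mo + Real.pi := by
    rcases lt_or_gt_of_ne hne with hlt | hlt
    · have h1 : (m1 : ℝ) < m0 := by nlinarith
      have hm : m1 + 1 ≤ m0 := by exact_mod_cast Int.lt_iff_add_one_le.mp (by exact_mod_cast h1)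
      have hm' : (m1:ℝ) + 1 ≤ (m0:ℝ) := by exact_mod_cast hm
      obtain ⟨c, hc, hfc⟩ := intermediate_value_Icc' (by norm_num : (0:ℝ) ≤ 1) hf
        (Set.mem_Icc.mpr ⟨by nlinarith, by nlinarith⟩ :
          2 * Real.pi * m1 + Real.pi ∈ Set.Icc (f 1) (f 0))
      exact ⟨c, hc, m1, hfc⟩
    · have h1 : (m0 : ℝ) < m1 := by nlinarith
      have hm : m0 + 1 ≤ m1 := by exact_mod_cast Int.lt_iff_add_one_le.mp (by exact_mod_cast h1)
      have hm' : (m0:ℝ) + 1 ≤ (m1:ℝ) := by exact_mod_cast hm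
      obtain ⟨c, hc, hfc⟩ := intermediate_value_Icc (by norm_num : (0:ℝ) ≤ 1) hf
        (Set.mem_Icc.mpr ⟨by nlinarith, by nlinarith⟩ :
          2 * Real.pi * m0 + Real.pi ∈ Set.Icc (f 0) (f 1))
      exact ⟨c, hc, m0, hfc⟩
  obtain ⟨c, hc, mo, hfc⟩ := key
  obtain ⟨m, hm⟩ := h c hc
  rw [hm] at hfc
  have h2 : (2 * (m:ℝ)) = 2 * mo + 1 := by nlinarith
  have : 2 * m = 2 * mo + 1 := by exact_mod_cast h2
  omega


private lemma tele_prod (f : ℕ → ℂ) (hf : ∀ i, f i ≠ 0) (n : ℕ) :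
    f 0 * ∏ i ∈ Finset.range n, (f (i+1) / f i) = f n := by
  induction n with
  | zero => simp
  | succ n ih =>
    rw [Finset.prod_range_succ, ← mul_assoc, ih, mul_div_assoc']
    exact mul_div_cancel_left₀ _ (hf n)

lemma square_lift (G : ℝ × ℝ → ℂ) (hG : Continuous G) (habs : ∀ p, ‖G p‖ = 1) :
    ∃ θ : ℝ × ℝ → ℝ,
      ContinuousOn θ (Set.Icc (0:ℝ) 1 ×ˢ Set.Icc (0:ℝ) 1) ∧
      ∀ p ∈ Set.Icc (0:ℝ) 1 ×ˢ Set.Icc (0:ℝ) 1, Complex.exp (θ p * Complex.I) = G p := by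
  set K : Set (ℝ × ℝ) := Set.Icc (0:ℝ) 1 ×ˢ Set.Icc (0:ℝ) 1 with hK
  have hKc : IsCompact K := (isCompact_Icc).prod isCompact_Icc
  have hGne : ∀ p, G p ≠ 0 := by
    intro p h
    have := habs p
    rw [h] at this
    simp at this
  -- uniform continuity on K
  have hu : UniformContinuousOn G K := hKc.uniformContinuousOn_of_continuous hG.continuousOn
  rw [Metric.uniformContinuousOn_iff] at hu
  obtain ⟨δ, hδ, hδ'⟩ := hu 1 one_pos
  obtain ⟨n, hn⟩ := exists_nat_gt (1/δ)
  have hnpos : 0 < (n:ℝ) := lt_trans (by positivity) hn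
  have hn0 : (n:ℝ) ≠ 0 := ne_of_gt hnpos
  -- scaled points stay in K
  have hscale : ∀ (c : ℝ), 0 ≤ c → c ≤ 1 → ∀ p ∈ K, c • p ∈ K := by
    rintro c hc0 hc1 ⟨s, t⟩ ⟨⟨hs0, hs1⟩, ⟨ht0, ht1⟩⟩
    constructor
    · constructor
      · exact mul_nonneg hc0 hs0
      · calc c * s ≤ 1 * s := by nlinarith
          _ ≤ 1 := by nlinarith
    · constructor
      · exact mul_nonneg hc0 ht0
      · calc c * t ≤ 1 * t := by nlinarith
          _ ≤ 1 := by nlinarith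
  -- the ratio function
  set r : ℕ → (ℝ × ℝ) → ℂ := fun i p => G ((((i:ℝ)+1)/n) • p) / G (((i:ℝ)/n) • p) with hr
  have hrcont : ∀ i, Continuous (r i) := by
    intro i
    exact Continuous.div (by fun_prop) (by fun_prop) (fun p => hGne _)
  have habs_r : ∀ i p, ‖r i p‖ = 1 := by
    intro i p
    simp [hr, norm_div, habs]
  -- for p ∈ K and i < n, the ratio is close to 1
  have hclose : ∀ i < n, ∀ p ∈ K, ‖r i p - 1‖ < 1 := by
    intro i hi p hp
    have h1 : (((i:ℝ)+1)/n) • p ∈ K := by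
      apply hscale _ (by positivity) _ p hp
      rw [div_le_one hnpos]
      have : (i:ℝ) + 1 ≤ n := by exact_mod_cast Nat.succ_le_of_lt hi
      linarith
    have h2 : ((i:ℝ)/n) • p ∈ K := by
      apply hscale _ (by positivity) _ p hp
      rw [div_le_one hnpos]
      have : (i:ℝ) ≤ n := by exact_mod_cast le_of_lt hi
      linarith
    have hdist : dist ((((i:ℝ)+1)/n) • p) (((i:ℝ)/n) • p) < δ := by
      rw [dist_eq_norm, ← sub_smul]
      have : ((i:ℝ)+1)/n - (i:ℝ)/n = 1/n := by field_simp; ring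
      rw [this]
      have hnorm : ‖p‖ ≤ 1 := by
        obtain ⟨⟨hs0, hs1⟩, ⟨ht0, ht1⟩⟩ := hp
        rw [Prod.norm_def]
        apply max_le <;> rw [Real.norm_eq_abs, abs_le] <;> constructor <;> linarith
      calc ‖(1/(n:ℝ)) • p‖ = (1/n) * ‖p‖ := by
            rw [norm_smul, Real.norm_eq_abs, abs_of_pos (by positivity)]
        _ ≤ (1/n) * 1 := by
            apply mul_le_mul_of_nonneg_left hnorm (by positivity)
        _ < δ := by
            rw [mul_one, div_lt_iff₀ hnpos]
            calc 1 = (1/δ) * δ := by field_simp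
              _ < n * δ := by exact mul_lt_mul_of_pos_right hn hδ
              _ = δ * n := mul_comm _ _
    have := hδ' _ h1 _ h2 hdist
    calc ‖r i p - 1‖
        = ‖G ((((i:ℝ)+1)/n) • p) - G (((i:ℝ)/n) • p)‖ / ‖G (((i:ℝ)/n) • p)‖ := by
          rw [hr]
          rw [div_sub_one (hGne _), norm_div]
      _ = dist (G ((((i:ℝ)+1)/n) • p)) (G (((i:ℝ)/n) • p)) := by rw [habs, div_one, Complex.dist_eq]
      _ < 1 := this
  have hslit : ∀ i < n, ∀ p ∈ K, r i p ∈ Complex.slitPlane := by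
    intro i hi p hp
    have h := hclose i hi p hp
    rw [Complex.mem_slitPlane_iff]
    left
    have h1 : ‖r i p - 1‖ ^ 2 < 1 := by nlinarith [norm_nonneg (r i p - 1)]
    have hsq : (r i p).re * (r i p).re + (r i p).im * (r i p).im = 1 := by
      have h2 := Complex.sq_norm (r i p)
      rw [habs_r i p, Complex.normSq_apply] at h2
      linarith [h2]
    rw [Complex.sq_norm, Complex.normSq_apply, Complex.sub_re, Complex.sub_im,
      Complex.one_re, Complex.one_im] at h1
    nlinarith
  -- define θ
  set θ : ℝ × ℝ → ℝ := fun p =>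
    Complex.arg (G ((0:ℝ) • p)) + ∑ i ∈ Finset.range n, Complex.arg (r i p) with hθ
  refine ⟨θ, ?_, ?_⟩
  · -- continuity
    apply ContinuousOn.add
    · have : (fun p : ℝ × ℝ => Complex.arg (G ((0:ℝ) • p))) = fun _ => Complex.arg (G 0) := by
        funext p; rw [zero_smul]
      rw [this]; exact continuousOn_const
    · apply continuousOn_finset_sum
      intro i hi
      intro p hp
      apply ContinuousAt.continuousWithinAt
      exact (Complex.continuousAt_arg (hslit i (Finset.mem_range.mp hi) p hp)).comp
        ((hrcont i).continuousAt)
  · intro p hp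
    have key : Complex.exp (θ p * Complex.I)
        = Complex.exp (Complex.arg (G ((0:ℝ) • p)) * Complex.I)
          * ∏ i ∈ Finset.range n, Complex.exp (Complex.arg (r i p) * Complex.I) := by
      rw [hθ]
      push_cast
      rw [add_mul, Finset.sum_mul, Complex.exp_add, Complex.exp_sum]
    rw [key]
    have e0 : Complex.exp (Complex.arg (G ((0:ℝ) • p)) * Complex.I) = G ((0:ℝ) • p) := by
      have := Complex.norm_mul_exp_arg_mul_I (G ((0:ℝ) • p))
      rwa [habs, Complex.ofReal_one, one_mul] at this
    have er : ∀ i, Complex.exp (Complex.arg (r i p) * Complex.I) = r i p := by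
      intro i
      have := Complex.norm_mul_exp_arg_mul_I (r i p)
      rwa [habs_r, Complex.ofReal_one, one_mul] at this
    rw [e0]
    rw [Finset.prod_congr rfl (fun i _ => er i)]
    have := tele_prod (fun i => G (((i:ℝ)/n) • p)) (fun i => hGne _) n
    simp only [hr]
    convert this using 3 with i
    · rw [Nat.cast_zero, zero_div]
    · push_cast; ring_nf
    · rw [div_self hn0, one_smul]

end AnalyticAux

noncomputable section HopfAux

def quatI : Quaternion ℝ := ⟨0, 1, 0, 0⟩
def quatJ : Quaternion ℝ := ⟨0, 0, 1, 0⟩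

@[simp] lemma quatK_re : quatK.re = 0 := rfl
@[simp] lemma quatK_imI : quatK.imI = 0 := rfl
@[simp] lemma quatK_imJ : quatK.imJ = 0 := rfl
@[simp] lemma quatK_imK : quatK.imK = 1 := rfl
@[simp] lemma quatI_re : quatI.re = 0 := rfl
@[simp] lemma quatI_imI : quatI.imI = 1 := rfl
@[simp] lemma quatI_imJ : quatI.imJ = 0 := rfl
@[simp] lemma quatI_imK : quatI.imK = 0 := rfl
@[simp] lemma quatJ_re : quatJ.re = 0 := rfl
@[simp] lemma quatJ_imI : quatJ.imI = 0 := rfl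
@[simp] lemma quatJ_imJ : quatJ.imJ = 1 := rfl
@[simp] lemma quatJ_imK : quatJ.imK = 0 := rfl

lemma norm_eq_one_of_normSq (a : Quaternion ℝ) (h : normSq a = 1) : ‖a‖ = 1 := by
  nlinarith [Quaternion.normSq_eq_norm_mul_self a, norm_nonneg a]

lemma normSq_eq_one_of_norm (a : Quaternion ℝ) (h : ‖a‖ = 1) : normSq a = 1 := by
  rw [Quaternion.normSq_eq_norm_mul_self, h, mul_one]

lemma normSq_quatJ : normSq quatJ = 1 := by
  rw [Quaternion.normSq_def']; simp

lemma norm_quatJ : ‖quatJ‖ = 1 := norm_eq_one_of_normSq _ normSq_quatJ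

lemma gamma_norm {z : Quaternion ℝ} (hz : z ∈ circleGamma) : ‖z‖ = 1 := by
  obtain ⟨x, y, rfl, hxy⟩ := hz
  apply norm_eq_one_of_normSq
  rw [Quaternion.normSq_def']
  simp [Quaternion.re_coe, Quaternion.imI_coe, Quaternion.imJ_coe, Quaternion.imK_coe]
  nlinarith

lemma gamma_mem (w : Quaternion ℝ) (h1 : w.imI = 0) (h2 : w.imJ = 0) (h3 : normSq w = 1) :
    w ∈ circleGamma := by
  refine ⟨w.re, w.imK, ?_, ?_⟩
  · ext <;> simp [Quaternion.re_coe, Quaternion.imI_coe, Quaternion.imJ_coe, Quaternion.imK_coe,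
      h1, h2]
  · rw [Quaternion.normSq_def'] at h3
    nlinarith

lemma star_unit_left (a : Quaternion ℝ) (h : ‖a‖ = 1) : star a * a = 1 := by
  rw [Quaternion.star_mul_self, normSq_eq_one_of_norm a h]
  exact_mod_cast rfl

lemma star_unit_right (a : Quaternion ℝ) (h : ‖a‖ = 1) : a * star a = 1 := by
  rw [Quaternion.self_mul_star, normSq_eq_one_of_norm a h]
  exact_mod_cast rfl

/-- If `k` commutes with `w` then `w` has no `i` or `j` component. -/
lemma imI_imJ_eq_zero_of_comm (w : Quaternion ℝ) (h : quatK * w = w * quatK) :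
    w.imI = 0 ∧ w.imJ = 0 := by
  have hI := congrArg QuaternionAlgebra.imI h
  have hJ := congrArg QuaternionAlgebra.imJ h
  rw [Quaternion.imI_mul, Quaternion.imI_mul] at hI
  rw [Quaternion.imJ_mul, Quaternion.imJ_mul] at hJ
  simp at hI hJ
  constructor <;> linarith

lemma jkj : quatJ * quatK * star quatJ = -quatK := by
  ext <;> simp [Quaternion.re_mul, Quaternion.imI_mul, Quaternion.imJ_mul, Quaternion.imK_mul]

lemma gamma_j_comm {w : Quaternion ℝ} (hw : w ∈ circleGamma) :
    star w * quatJ = quatJ * w := by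
  obtain ⟨x, y, rfl, _⟩ := hw
  ext <;> simp [Quaternion.re_mul, Quaternion.imI_mul, Quaternion.imJ_mul, Quaternion.imK_mul,
    Quaternion.re_coe, Quaternion.imI_coe, Quaternion.imJ_coe, Quaternion.imK_coe]

lemma hopf_qj (q : Quaternion ℝ) : hopfMap (q * quatJ) = -hopfMap q := by
  unfold hopfMap
  rw [StarMul.star_mul]
  calc q * quatJ * quatK * (star quatJ * star q)
      = q * (quatJ * quatK * star quatJ) * star q := by simp only [mul_assoc]
    _ = q * (-quatK) * star q := by rw [jkj]
    _ = -(q * quatK * star q) := by rw [mul_neg, neg_mul]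


/-- If `a, b` are unit quaternions on the same Hopf fiber, `star a * b` commutes with `k`. -/
lemma comm_k_of_same_fiber (a b : Quaternion ℝ) (ha : ‖a‖ = 1) (hb : ‖b‖ = 1)
    (h : hopfMap a = hopfMap b) : quatK * (star a * b) = star a * b * quatK := by
  have hw : ‖star a * b‖ = 1 := by
    rw [norm_mul, Quaternion.norm_star, ha, hb, mul_one]
  have key : (star a * b) * quatK * star (star a * b) = quatK := by
    rw [StarMul.star_mul, star_star]
    unfold hopfMap at h
    calc star a * b * quatK * (star b * a)
        = star a * (b * quatK * star b) * a := by simp only [mul_assoc]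
      _ = star a * (a * quatK * star a) * a := by rw [← h]
      _ = (star a * a) * quatK * (star a * a) := by simp only [mul_assoc]
      _ = quatK := by rw [star_unit_left a ha, one_mul, mul_one]
  calc quatK * (star a * b)
      = (star a * b) * quatK * star (star a * b) * (star a * b) := by rw [key]
    _ = (star a * b) * quatK * (star (star a * b) * (star a * b)) := by simp only [mul_assoc]
    _ = star a * b * quatK := by rw [star_unit_left _ hw, mul_one]

/-- Projection of the `span(1,k)` plane onto `ℂ`. -/
def qc (u : Quaternion ℝ) : ℂ := ⟨u.re, u.imK⟩

@[simp] lemma qc_re (u : Quaternion ℝ) : (qc u).re = u.re := rfl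
@[simp] lemma qc_im (u : Quaternion ℝ) : (qc u).im = u.imK := rfl

lemma qc_eq (u : Quaternion ℝ) : qc u = (u.re : ℂ) + (u.imK : ℝ) * Complex.I := by
  apply Complex.ext <;> simp

lemma qc_continuous : Continuous qc := by
  have : qc = fun u => (u.re : ℂ) + (u.imK : ℝ) * Complex.I := funext qc_eq
  rw [this]
  exact ((Complex.continuous_ofReal.comp Quaternion.continuous_re).add
    ((Complex.continuous_ofReal.comp Quaternion.continuous_imK).mul continuous_const))

lemma qc_mul (u v : Quaternion ℝ) (hu1 : u.imI = 0) (hu2 : u.imJ = 0)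
    (hv1 : v.imI = 0) (hv2 : v.imJ = 0) :
    qc (u * v) = qc u * qc v ∧ (u * v).imI = 0 ∧ (u * v).imJ = 0 := by
  refine ⟨?_, ?_, ?_⟩
  · apply Complex.ext
    · simp [Quaternion.re_mul, hu1, hu2, hv1, hv2, Complex.mul_re]
    · simp [Quaternion.imK_mul, hu1, hu2, hv1, hv2, Complex.mul_im]
  · simp [Quaternion.imI_mul, hu1, hu2, hv1, hv2]
  · simp [Quaternion.imJ_mul, hu1, hu2, hv1, hv2]

lemma qc_abs (u : Quaternion ℝ) (h1 : u.imI = 0) (h2 : u.imJ = 0) (h3 : normSq u = 1) :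
    ‖qc u‖ = 1 := by
  have : ‖qc u‖ ^ 2 = 1 := by
    rw [Complex.sq_norm, Complex.normSq_apply]
    rw [Quaternion.normSq_def'] at h3
    simp only [qc_re, qc_im]
    nlinarith
  nlinarith [norm_nonneg (qc u)]

/-- `qc` of a circle element `cos a + sin a k` is `exp (a * I)`. -/
lemma qc_w2 (a : ℝ) : qc ((Real.cos a : Quaternion ℝ) + Real.sin a • quatK)
    = Complex.exp (a * Complex.I) := by
  rw [Complex.exp_mul_I]
  apply Complex.ext <;>
    simp [Quaternion.re_coe, Quaternion.imI_coe, Quaternion.imJ_coe, Quaternion.imK_coe,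
      Complex.cos_ofReal_re, Complex.sin_ofReal_re, Complex.add_re, Complex.add_im,
      Complex.mul_re, Complex.mul_im, Complex.cos_ofReal_im, Complex.sin_ofReal_im]


lemma gamma_star {w : Quaternion ℝ} (hw : w ∈ circleGamma) : star w ∈ circleGamma := by
  obtain ⟨x, y, rfl, hxy⟩ := hw
  refine ⟨x, -y, ?_, by nlinarith⟩
  ext <;> simp [Quaternion.re_coe, Quaternion.imI_coe, Quaternion.imJ_coe, Quaternion.imK_coe]

lemma star_j_gamma {w : Quaternion ℝ} (hw : w ∈ circleGamma) :
    star quatJ * star w = w * star quatJ := by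
  have h1 := gamma_j_comm (gamma_star hw)
  rw [star_star] at h1
  -- h1 : w * quatJ = quatJ * star w
  calc star quatJ * star w = star (w * quatJ) := by rw [StarMul.star_mul]
    _ = star (quatJ * star w) := by rw [h1]
    _ = w * star quatJ := by rw [StarMul.star_mul, star_star]

/-- The explicit null-homotopy of the fiber circle in `S³`. -/
def Hq (s t : ℝ) : Quaternion ℝ :=
  ((Real.cos (2*Real.pi*t) * Real.cos (Real.pi*s/2) : ℝ) : Quaternion ℝ)
    + Real.sin (Real.pi*s/2) • quatI
    + (Real.sin (2*Real.pi*t) * Real.cos (Real.pi*s/2)) • quatK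

@[simp] lemma Hq_re (s t : ℝ) : (Hq s t).re = Real.cos (2*Real.pi*t) * Real.cos (Real.pi*s/2) := by
  simp [Hq]
@[simp] lemma Hq_imI (s t : ℝ) : (Hq s t).imI = Real.sin (Real.pi*s/2) := by simp [Hq]
@[simp] lemma Hq_imJ (s t : ℝ) : (Hq s t).imJ = 0 := by simp [Hq]
@[simp] lemma Hq_imK (s t : ℝ) : (Hq s t).imK = Real.sin (2*Real.pi*t) * Real.cos (Real.pi*s/2) := by
  simp [Hq]

lemma Hq_mem (s t : ℝ) : Hq s t ∈ Metric.sphere (0 : Quaternion ℝ) 1 := by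
  rw [mem_sphere_zero_iff_norm]
  apply norm_eq_one_of_normSq
  rw [Quaternion.normSq_def']
  simp only [Hq_re, Hq_imI, Hq_imJ, Hq_imK]
  nlinarith [Real.sin_sq_add_cos_sq (2*Real.pi*t), Real.sin_sq_add_cos_sq (Real.pi*s/2)]

lemma Hq_continuous : Continuous (fun p : ℝ × ℝ => Hq p.1 p.2) := by
  unfold Hq
  apply Continuous.add
  apply Continuous.add
  · exact Quaternion.continuous_coe.comp (by fun_prop)
  · exact Continuous.smul (by fun_prop : Continuous fun p : ℝ × ℝ => Real.sin (Real.pi*p.1/2)) continuous_const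
  · exact Continuous.smul (by fun_prop : Continuous fun p : ℝ × ℝ =>
      Real.sin (2*Real.pi*p.2) * Real.cos (Real.pi*p.1/2)) continuous_const

lemma Hq_zero (t : ℝ) :
    Hq 0 t = (1 : Quaternion ℝ) *
      ((Real.cos (2*Real.pi*t) : Quaternion ℝ) + Real.sin (2*Real.pi*t) • quatK) := by
  rw [one_mul]
  have h0 : Real.pi * 0 / 2 = 0 := by ring
  ext <;> simp [h0, Quaternion.re_coe, Quaternion.imI_coe, Quaternion.imJ_coe,
    Quaternion.imK_coe]

lemma Hq_one (t : ℝ) : Hq 1 t = quatI := by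
  have h0 : Real.pi * 1 / 2 = Real.pi / 2 := by ring
  ext <;> simp [h0, Real.cos_pi_div_two, Real.sin_pi_div_two]

lemma Hq_period (s : ℝ) : Hq s 0 = Hq s 1 := by
  have h0 : 2 * Real.pi * 0 = 0 := by ring
  have h1 : 2 * Real.pi * 1 = 2 * Real.pi := by ring
  ext <;> simp [h0, h1, Real.cos_two_pi, Real.sin_two_pi]

lemma Hq_base : Hq 0 0 = 1 := by
  have h0 : Real.pi * 0 / 2 = 0 := by ring
  have h1 : 2 * Real.pi * 0 = 0 := by ring
  ext <;> simp [h0, h1]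

lemma w2_gamma (a : ℝ) :
    (Real.cos a : Quaternion ℝ) + Real.sin a • quatK ∈ circleGamma :=
  ⟨Real.cos a, Real.sin a, rfl, by nlinarith [Real.sin_sq_add_cos_sq a]⟩

lemma w2_imI (a : ℝ) : ((Real.cos a : Quaternion ℝ) + Real.sin a • quatK).imI = 0 := by
  simp [Quaternion.imI_coe]

lemma w2_imJ (a : ℝ) : ((Real.cos a : Quaternion ℝ) + Real.sin a • quatK).imJ = 0 := by
  simp [Quaternion.imJ_coe]

lemma exp_eq_exp_real (x y : ℝ) (h : Complex.exp (x * Complex.I) = Complex.exp (y * Complex.I)) :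
    ∃ n : ℤ, x - y = 2 * Real.pi * n := by
  rw [Complex.exp_eq_exp_iff_exists_int] at h
  obtain ⟨n, hn⟩ := h
  refine ⟨n, ?_⟩
  have hfac : ((y : ℂ) + n * (2 * Real.pi)) * Complex.I
      = (y : ℂ) * Complex.I + n * (2 * (Real.pi:ℂ) * Complex.I) := by ring
  rw [← hfac] at hn
  have h2 := mul_right_cancel₀ Complex.I_ne_zero hn
  have h3 : x = y + n * (2 * Real.pi) := by exact_mod_cast h2
  rw [h3]; push_cast; ring

end HopfAux


/-- **No automorphism of the Hopf bundle covers the antipodal map.**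
Let `S³` be the unit sphere of the real quaternions, with the circle subgroup `Γ` acting
by right multiplication, and `π(q) = q * k * q̄` the Hopf fibration onto `S²`. Then there
is no homeomorphism `φ` of `S³` that is `Γ`-equivariant and covers the antipodal map,
i.e. satisfies `φ(q·z) = φ(q)·z` for all `z ∈ Γ` and `π(φ(q)) = −π(q)`. -/
theorem no_hopf_bundle_automorphism_covers_antipodal_map :
    ¬ ∃ φ : Metric.sphere (0 : Quaternion ℝ) 1 ≃ₜ Metric.sphere (0 : Quaternion ℝ) 1,
      (∀ (q : Metric.sphere (0 : Quaternion ℝ) 1) (z : Quaternion ℝ), z ∈ circleGamma →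
        ∀ h : (q : Quaternion ℝ) * z ∈ Metric.sphere (0 : Quaternion ℝ) 1,
          (φ ⟨(q : Quaternion ℝ) * z, h⟩ : Quaternion ℝ) = (φ q : Quaternion ℝ) * z) ∧
      (∀ q : Metric.sphere (0 : Quaternion ℝ) 1,
        hopfMap (φ q : Quaternion ℝ) = -hopfMap (q : Quaternion ℝ)) := by
  rintro ⟨φ, heq, hcov⟩
  have hq1 : ∀ q : Metric.sphere (0 : Quaternion ℝ) 1, ‖(q : Quaternion ℝ)‖ = 1 :=
    fun q => mem_sphere_zero_iff_norm.mp q.2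
  -- the comparison map Z, measuring the difference between φ and right mult by j
  set Z : Metric.sphere (0 : Quaternion ℝ) 1 → Quaternion ℝ :=
    fun q => star ((q : Quaternion ℝ) * quatJ) * (φ q : Quaternion ℝ) with hZdef
  have hZnorm : ∀ q, ‖Z q‖ = 1 := by
    intro q
    rw [hZdef]
    simp only [norm_mul, Quaternion.norm_star, norm_mul, hq1, norm_quatJ, hq1 (φ q)]
    norm_num
  have hZcomm : ∀ q, quatK * Z q = Z q * quatK := by
    intro q
    apply comm_k_of_same_fiber ((q : Quaternion ℝ) * quatJ) (φ q : Quaternion ℝ)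
    · rw [norm_mul, hq1, norm_quatJ, mul_one]
    · exact hq1 (φ q)
    · rw [hopf_qj, hcov q]
  have hZij : ∀ q, (Z q).imI = 0 ∧ (Z q).imJ = 0 :=
    fun q => imI_imJ_eq_zero_of_comm _ (hZcomm q)
  have hZnormSq : ∀ q, normSq (Z q) = 1 := fun q => normSq_eq_one_of_norm _ (hZnorm q)
  have hZΓ : ∀ q, Z q ∈ circleGamma :=
    fun q => gamma_mem _ (hZij q).1 (hZij q).2 (hZnormSq q)
  -- equivariance of Z
  have hZequiv : ∀ (q : Metric.sphere (0 : Quaternion ℝ) 1) (w : Quaternion ℝ)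
      (hw : w ∈ circleGamma)
      (h : (q : Quaternion ℝ) * w ∈ Metric.sphere (0 : Quaternion ℝ) 1),
      Z ⟨(q : Quaternion ℝ) * w, h⟩ = w * Z q * w := by
    intro q w hw h
    rw [hZdef]
    simp only []
    rw [heq q w hw h]
    have e1 : star ((q : Quaternion ℝ) * w * quatJ)
        = star quatJ * (star w * star (q : Quaternion ℝ)) := by
      rw [StarMul.star_mul, StarMul.star_mul]
    rw [e1]
    have e2 := star_j_gamma hw
    calc star quatJ * (star w * star (q:Quaternion ℝ)) * ((φ q : Quaternion ℝ) * w)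
        = (star quatJ * star w) *
            (star (q:Quaternion ℝ) * (φ q : Quaternion ℝ) * w) := by simp only [mul_assoc]
      _ = (w * star quatJ) *
            (star (q:Quaternion ℝ) * (φ q : Quaternion ℝ) * w) := by rw [e2]
      _ = w * (star quatJ * star ((q:Quaternion ℝ)) *
            (φ q : Quaternion ℝ)) * w := by simp only [mul_assoc]
      _ = w * (star ((q:Quaternion ℝ) * quatJ) * (φ q : Quaternion ℝ)) * w := by
            rw [StarMul.star_mul]
  -- the circle-valued comparison function on the homotopy square
  set G : ℝ × ℝ → ℂ := fun p => qc (Z ⟨Hq p.1 p.2, Hq_mem p.1 p.2⟩) with hGdef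
  have hGcont : Continuous G := by
    apply qc_continuous.comp
    have hZcont : Continuous Z := by
      rw [hZdef]
      exact ((continuous_subtype_val.mul continuous_const).star).mul
        (continuous_subtype_val.comp φ.continuous)
    exact hZcont.comp (Hq_continuous.subtype_mk _)
  have hGabs : ∀ p, ‖G p‖ = 1 := by
    intro p
    exact qc_abs _ (hZij _).1 (hZij _).2 (hZnormSq _)
  -- base point
  have hone : (1 : Quaternion ℝ) ∈ Metric.sphere (0 : Quaternion ℝ) 1 := by
    rw [mem_sphere_zero_iff_norm, norm_one]
  have hGeval : ∀ p : ℝ × ℝ, G p = qc (Z ⟨Hq p.1 p.2, Hq_mem p.1 p.2⟩) := fun p => rfl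
  have hG00 : G (0, 0) = qc (Z ⟨1, hone⟩) := by
    rw [hGeval]
    exact congrArg (fun x => qc (Z x)) (Subtype.ext Hq_base)
  -- values of G on the three relevant edges
  have hGper : ∀ s, G (s, 0) = G (s, 1) := by
    intro s
    rw [hGeval, hGeval]
    exact congrArg (fun x => qc (Z x)) (Subtype.ext (Hq_period s))
  have hGone : ∀ t, G (1, t) = G (1, 0) := by
    intro t
    rw [hGeval, hGeval]
    exact congrArg (fun x => qc (Z x)) (Subtype.ext ((Hq_one t).trans (Hq_one 0).symm))
  have hGzero : ∀ t, G (0, t)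
      = Complex.exp ((2*Real.pi*t) * Complex.I) *
        (G (0,0) * Complex.exp ((2*Real.pi*t) * Complex.I)) := by
    intro t
    set w : Quaternion ℝ :=
      (Real.cos (2*Real.pi*t) : Quaternion ℝ) + Real.sin (2*Real.pi*t) • quatK with hwdef
    have hw : w ∈ circleGamma := w2_gamma _
    have hmemw : ((⟨1, hone⟩ : Metric.sphere (0 : Quaternion ℝ) 1) : Quaternion ℝ) * w ∈
        Metric.sphere (0 : Quaternion ℝ) 1 := by
      have hco : ((⟨1, hone⟩ : Metric.sphere (0 : Quaternion ℝ) 1) : Quaternion ℝ) = 1 := rfl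
      rw [mem_sphere_zero_iff_norm, hco, one_mul]
      exact gamma_norm hw
    have hsub : (⟨Hq 0 t, Hq_mem 0 t⟩ : Metric.sphere (0 : Quaternion ℝ) 1)
        = ⟨((⟨1, hone⟩ : Metric.sphere (0 : Quaternion ℝ) 1) : Quaternion ℝ) * w, hmemw⟩ :=
      Subtype.ext (Hq_zero t)
    have hE := hZequiv ⟨1, hone⟩ w hw hmemw
    rw [hGeval]
    show qc (Z ⟨Hq 0 t, Hq_mem 0 t⟩) = _
    rw [hsub, hE]
    have hu1 := (hZij ⟨1, hone⟩).1
    have hu2 := (hZij ⟨1, hone⟩).2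
    have hwi : w.imI = 0 := w2_imI _
    have hwj : w.imJ = 0 := w2_imJ _
    obtain ⟨m1, mi, mj⟩ := qc_mul (Z ⟨1, hone⟩) w hu1 hu2 hwi hwj
    obtain ⟨m2, -, -⟩ := qc_mul w (Z ⟨1, hone⟩ * w) hwi hwj mi mj
    rw [mul_assoc, m2, m1, hwdef, qc_w2, hG00]
    push_cast
    ring
  -- lift the circle-valued map on the square
  obtain ⟨θ, hθc, hθe⟩ := square_lift G hGcont hGabs
  have h01 : (0:ℝ) ∈ Set.Icc (0:ℝ) 1 := by norm_num
  have h11 : (1:ℝ) ∈ Set.Icc (0:ℝ) 1 := by norm_num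
  have hmemK : ∀ {a b : ℝ}, a ∈ Set.Icc (0:ℝ) 1 → b ∈ Set.Icc (0:ℝ) 1 →
      (a, b) ∈ Set.Icc (0:ℝ) 1 ×ˢ Set.Icc (0:ℝ) 1 :=
    fun ha hb => Set.mem_prod.mpr ⟨ha, hb⟩
  have hline : ∀ c ∈ Set.Icc (0:ℝ) 1, ContinuousOn (fun t : ℝ => θ (c, t)) (Set.Icc 0 1) := by
    intro c hc
    apply hθc.comp (Continuous.continuousOn (by fun_prop))
    intro t ht
    exact hmemK hc ht
  have hcol : ∀ c ∈ Set.Icc (0:ℝ) 1, ContinuousOn (fun s : ℝ => θ (s, c)) (Set.Icc 0 1) := by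
    intro c hc
    apply hθc.comp (Continuous.continuousOn (by fun_prop))
    intro s hs
    exact hmemK hs hc
  -- the loop over s = 1 is constant
  have hstep1 : θ (1, 1) - θ (1, 0) = 0 := by
    have h := endpoints_eq_of_int (fun t => θ (1, t) - θ (1, 0))
      ((hline 1 h11).sub continuousOn_const) ?_
    · simpa using h
    · intro t ht
      have e1 := hθe (1, t) (hmemK h11 ht)
      have e2 := hθe (1, 0) (hmemK h11 h01)
      have hexp : Complex.exp ((θ (1, t) : ℝ) * Complex.I)
          = Complex.exp ((θ (1, 0) : ℝ) * Complex.I) := by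
        rw [e1, e2, hGone t]
      exact exp_eq_exp_real _ _ hexp
  -- the loop over s = 0 winds twice
  have hstep0 : θ (0, 1) - θ (0, 0) = 4 * Real.pi := by
    have h := endpoints_eq_of_int (fun t => θ (0, t) - 4 * Real.pi * t - θ (0, 0))
      (((hline 0 h01).sub (by fun_prop)).sub continuousOn_const) ?_
    · simp only [mul_one, mul_zero] at h
      linarith
    · intro t ht
      have e1 := hθe (0, t) (hmemK h01 ht)
      have e0 := hθe (0, 0) (hmemK h01 h01)
      have hexp : Complex.exp ((θ (0, t) : ℝ) * Complex.I)
          = Complex.exp ((4 * Real.pi * t + θ (0, 0) : ℝ) * Complex.I) := by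
        rw [e1, hGzero t, ← e0, ← Complex.exp_add, ← Complex.exp_add]
        congr 1
        push_cast
        ring
      obtain ⟨n, hn⟩ := exp_eq_exp_real _ _ hexp
      refine ⟨n, ?_⟩
      show θ (0, t) - 4 * Real.pi * t - θ (0, 0) = 2 * Real.pi * n
      linarith
  -- but the two loops are homotopic through loops
  have hfin := endpoints_eq_of_int (fun s => θ (s, 1) - θ (s, 0))
    ((hcol 1 h11).sub (hcol 0 h01)) ?_
  · rw [hstep1, hstep0] at hfin
    have := Real.pi_pos
    linarith
  · intro s hs
    have e1 := hθe (s, 1) (hmemK hs h11)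
    have e0 := hθe (s, 0) (hmemK hs h01)
    have hexp : Complex.exp ((θ (s, 1) : ℝ) * Complex.I)
        = Complex.exp ((θ (s, 0) : ℝ) * Complex.I) := by
      rw [e1, e0, hGper s]
    exact exp_eq_exp_real _ _ hexp
end

section
/- (Euler–Poincaré reduction for semidirect products, right-invariant version, for the group of units of a Banach algebra.) Let A be a unital real Banach algebra with group of units Aˣ, V and F real Banach spaces, and R : A → L(V,V) a continuous unital algebra antihomomorphism (R(a*b) = R(b) ∘ R(a), R(1) = id). Fix a₀ ∈ V′ (continuous dual of V). Let L : A × A × F × F × V′ → ℝ be twice continuously differentiable and right-invariant: L(g*h, u*h, q, u_q, a ∘ R(h⁻¹)) = L(g, u, q, u_q, a) for all g ∈ A, u ∈ A, q, u_q ∈ F, a ∈ V′ and h ∈ Aˣ. Set l(ξ, q, u_q, a) := L(1, ξ, q, u_q, a). Let g : ℝ → Aˣ and q : ℝ → F be twice continuously differentiable curves, and define ξ(t) := ġ(t) * g(t)⁻¹ and a(t) := a₀ ∘ R(g(t)). Then the following are equivalent: (i) (g, q) satisfies the Euler–Lagrange equations for L_{a₀}: (d/dt)[D₂L(g(t), ġ(t),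 q(t), q̇(t), a₀)] = D₁L(g(t), ġ(t), q(t), q̇(t), a₀) in A′ and (d/dt)[D₄L(g(t), ġ(t), q(t), q̇(t), a₀)] = D₃L(g(t), ġ(t), q(t), q̇(t), a₀) in F′; (ii) the Euler–Poincaré equations with advected parameter hold: for every η ∈ A, (d/dt)[D₁l(ξ(t), q(t), q̇(t), a(t))(η)] = −D₁l(ξ(t), q(t), q̇(t), a(t))(ξ(t)*η − η*ξ(t)) + D₄l(ξ(t), q(t), q̇(t), a(t))(a(t) ∘ R(η)), together with the Euler–Lagrange equation (d/dt)[D₃l(ξ(t), q(t), q̇(t), a(t))] = D₂l(ξ(t), q(t), q̇(t), a(t)) in F′. -/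
set_option maxHeartbeats 1000000


/-- **Euler–Poincaré reduction for semidirect products (right-invariant version),
for the group of units of a Banach algebra.**  With `ξ = ġ g⁻¹` the right-trivialized
velocity and `a = a₀ ∘ R(g)` the advected parameter, a curve `(g, q)` satisfies the
Euler–Lagrange equations for `L_{a₀}` iff `(ξ, q, a)` satisfies the Euler–Poincaré
equations with advected parameter together with the Euler–Lagrange equations in `q`. -/
theorem euler_poincare_semidirect_product_units
    {A : Type*} [NormedRing A] [NormedAlgebra ℝ A] [CompleteSpace A]
    {V : Type*} [NormedAddCommGroup V] [NormedSpace ℝ V]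
    {F : Type*} [NormedAddCommGroup F] [NormedSpace ℝ F]
    -- the continuous unital algebra antihomomorphism R : A → L(V,V)
    (R : A →L[ℝ] (V →L[ℝ] V))
    (hR1 : R 1 = ContinuousLinearMap.id ℝ V)
    (hRmul : ∀ a b : A, R (a * b) = (R b).comp (R a))
    (a₀ : V →L[ℝ] ℝ)
    -- the Lagrangian, twice continuously differentiable and right-invariant
    (L : A → A → F → F → (V →L[ℝ] ℝ) → ℝ)
    (hL : ContDiff ℝ 2 (fun p : A × A × F × F × (V →L[ℝ] ℝ) =>
      L p.1 p.2.1 p.2.2.1 p.2.2.2.1 p.2.2.2.2))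
    (hLinv : ∀ (g u : A) (q uq : F) (a : V →L[ℝ] ℝ) (h : Aˣ),
      L (g * ↑h) (u * ↑h) q uq (a.comp (R ↑h⁻¹)) = L g u q uq a)
    -- the reduced Lagrangian
    (l : A → F → F → (V →L[ℝ] ℝ) → ℝ)
    (hl : ∀ ξ q uq a, l ξ q uq a = L 1 ξ q uq a)
    -- the curves
    (g : ℝ → A) (hgU : ∀ t, IsUnit (g t)) (hg : ContDiff ℝ 2 g)
    (q : ℝ → F) (hq : ContDiff ℝ 2 q)
    (ξ : ℝ → A) (hξ : ∀ t, ξ t = deriv g t * Ring.inverse (g t))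
    (a : ℝ → (V →L[ℝ] ℝ)) (ha : ∀ t, a t = a₀.comp (R (g t))) :
    -- (i) Euler–Lagrange equations for L_{a₀}
    (∀ t : ℝ,
      deriv (fun s => fderiv ℝ (fun u => L (g s) u (q s) (deriv q s) a₀) (deriv g s)) t
        = fderiv ℝ (fun g' => L g' (deriv g t) (q t) (deriv q t) a₀) (g t) ∧
      deriv (fun s => fderiv ℝ (fun uq => L (g s) (deriv g s) (q s) uq a₀) (deriv q s)) t
        = fderiv ℝ (fun q' => L (g t) (deriv g t) q' (deriv q t) a₀) (q t))
    ↔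
    -- (ii) Euler–Poincaré equations with advected parameter, plus EL equations in q
    (∀ t : ℝ,
      (∀ η : A,
        deriv (fun s => (fderiv ℝ (fun ξ' => l ξ' (q s) (deriv q s) (a s)) (ξ s)) η) t
          = -(fderiv ℝ (fun ξ' => l ξ' (q t) (deriv q t) (a t)) (ξ t)) (ξ t * η - η * ξ t)
            + (fderiv ℝ (fun a' => l (ξ t) (q t) (deriv q t) a') (a t)) ((a t).comp (R η))) ∧
      deriv (fun s => fderiv ℝ (fun uq => l (ξ s) (q s) uq (a s)) (deriv q s)) t
        = fderiv ℝ (fun q' => l (ξ t) q' (deriv q t) (a t)) (q t)) := by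
  classical
  -- basic facts about units
  have hgi : ∀ s, Ring.inverse (g s) * g s = 1 := fun s => Ring.inverse_mul_cancel _ (hgU s)
  have hig : ∀ s, g s * Ring.inverse (g s) = 1 := fun s => Ring.mul_inverse_cancel _ (hgU s)
  have hξg : ∀ s, ξ s * g s = deriv g s := fun s => by
    rw [hξ s, mul_assoc, hgi s, mul_one]
  have hvu : ∀ s, (↑(hgU s).unit⁻¹ : A) = Ring.inverse (g s) := fun s => by
    have h0 := Ring.inverse_unit (hgU s).unit
    rw [(hgU s).unit_spec] at h0
    exact h0.symm
  -- composition facts for R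
  have hRcomp : ∀ (b c : A) (w : V →L[ℝ] ℝ), (w.comp (R b)).comp (R c) = w.comp (R (c * b)) := by
    intro b c w; rw [hRmul, ContinuousLinearMap.comp_assoc]
  have hRinv : ∀ s, (a s).comp (R (Ring.inverse (g s))) = a₀ := fun s => by
    rw [ha s, hRcomp, hgi s, hR1, ContinuousLinearMap.comp_id]
  -- invariance identity (I1): l(ξ', Q, UQ, a s) = L(g s, ξ' * g s, Q, UQ, a₀)
  have hI1 : ∀ (s : ℝ) (Q UQ : F) (ξ' : A),
      l ξ' Q UQ (a s) = L (g s) (ξ' * g s) Q UQ a₀ := by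
    intro s Q UQ ξ'
    have h1 := hLinv 1 ξ' Q UQ (a s) (hgU s).unit
    rw [one_mul, (hgU s).unit_spec, hvu s, hRinv s] at h1
    rw [hl, ← h1]
  -- (I2): l(ξ s, Q, UQ, a s) = L(g s, ġ s, Q, UQ, a₀)
  have hI2 : ∀ (s : ℝ) (Q UQ : F),
      l (ξ s) Q UQ (a s) = L (g s) (deriv g s) Q UQ a₀ := fun s Q UQ => by
    rw [hI1 s Q UQ (ξ s), hξg s]
  -- (I3): L(g', ġ t, q t, q̇ t, a₀) = L(g' * (g t)⁻¹, ξ t, q t, q̇ t, a t)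
  have hI3 : ∀ (t : ℝ) (g' : A),
      L g' (deriv g t) (q t) (deriv q t) a₀
        = L (g' * Ring.inverse (g t)) (ξ t) (q t) (deriv q t) (a t) := by
    intro t g'
    have h1 := hLinv g' (deriv g t) (q t) (deriv q t) a₀ (hgU t).unit⁻¹
    rw [inv_inv, (hgU t).unit_spec, hvu t, ← hξ t, ← ha t] at h1
    exact h1.symm
  -- part (2): the q-equations on the two sides are literally identical.
  have hP2fun : (fun s => fderiv ℝ (fun uq => l (ξ s) (q s) uq (a s)) (deriv q s))
      = (fun s => fderiv ℝ (fun uq => L (g s) (deriv g s) (q s) uq a₀) (deriv q s)) := by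
    funext s
    congr 1
    funext uq
    exact hI2 s (q s) uq
  have hP2fun' : ∀ t : ℝ, fderiv ℝ (fun q' => l (ξ t) q' (deriv q t) (a t)) (q t)
      = fderiv ℝ (fun q' => L (g t) (deriv g t) q' (deriv q t) a₀) (q t) := by
    intro t
    congr 1
    funext q'
    exact hI2 t q' (deriv q t)
  -- analytic setup for part (1)
  set Lf : A × A × F × F × (V →L[ℝ] ℝ) → ℝ :=
    fun p => L p.1 p.2.1 p.2.2.1 p.2.2.2.1 p.2.2.2.2 with hLfdef
  have hLdiff : Differentiable ℝ Lf := hL.differentiable (by norm_num)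
  have hNd : ∀ p, HasFDerivAt Lf (fderiv ℝ Lf p) p := fun p => (hLdiff p).hasFDerivAt
  have hN1 : ContDiff ℝ 1 (fderiv ℝ Lf) := hL.fderiv_right (by norm_num)
  -- regularity of the curves
  have h21 : ((2 : WithTop ℕ∞)) = 1 + 1 := by norm_num
  have hg' := contDiff_succ_iff_deriv.mp (h21 ▸ hg)
  have hq' := contDiff_succ_iff_deriv.mp (h21 ▸ hq)
  have hgD : Differentiable ℝ g := hg'.1
  have hgd1 : ContDiff ℝ 1 (deriv g) := hg'.2.2
  have hq1 : ContDiff ℝ 1 q := hq.of_le (by norm_num)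
  have hqd1 : ContDiff ℝ 1 (deriv q) := hq'.2.2
  have hg1 : ContDiff ℝ 1 g := hg.of_le (by norm_num)
  have hcC : ContDiff ℝ 1
      (fun s => ((g s, deriv g s, q s, deriv q s, a₀) : A × A × F × F × (V →L[ℝ] ℝ))) :=
    hg1.prodMk (hgd1.prodMk (hq1.prodMk (hqd1.prodMk contDiff_const)))
  -- the slot-2 embedding
  set E2 : A →L[ℝ] A × A × F × F × (V →L[ℝ] ℝ) :=
    (0 : A →L[ℝ] A).prod ((ContinuousLinearMap.id ℝ A).prod
      (0 : A →L[ℝ] F × F × (V →L[ℝ] ℝ))) with hE2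
  have hE2app : ∀ z : A, E2 z = ((0, z, 0, 0, 0) : A × A × F × F × (V →L[ℝ] ℝ)) :=
    fun z => rfl
  -- the momentum curve
  set mfun : ℝ → (A →L[ℝ] ℝ) :=
    fun s => (fderiv ℝ Lf (g s, deriv g s, q s, deriv q s, a₀)).comp E2 with hmfun
  have hmC : ContDiff ℝ 1 mfun := (hN1.comp hcC).clm_comp contDiff_const
  -- key identification of the momentum
  have keyM : ∀ s, fderiv ℝ (fun u => L (g s) u (q s) (deriv q s) a₀) (deriv g s) = mfun s := by
    intro s
    have hemb : HasFDerivAt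
        (fun u : A => ((g s, u, q s, deriv q s, a₀) : A × A × F × F × (V →L[ℝ] ℝ)))
        E2 (deriv g s) :=
      (hasFDerivAt_const _ _).prodMk ((hasFDerivAt_id _).prodMk (hasFDerivAt_const _ _))
    exact ((hNd _).comp _ hemb).fderiv
  -- the ξ'-derivative of l along the curve, in terms of the momentum
  have keyXi : ∀ (s : ℝ) (ζ : A),
      fderiv ℝ (fun ξ' => l ξ' (q s) (deriv q s) (a s)) (ξ s) ζ = mfun s (ζ * g s) := by
    intro s ζ
    have hfe : (fun ξ' => l ξ' (q s) (deriv q s) (a s))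
        = fun ξ' => Lf (g s, ξ' * g s, q s, deriv q s, a₀) :=
      funext fun ξ' => hI1 s _ _ ξ'
    rw [hfe]
    have hemb : HasFDerivAt
        (fun ξ' : A => ((g s, ξ' * g s, q s, deriv q s, a₀) : A × A × F × F × (V →L[ℝ] ℝ)))
        ((0 : A →L[ℝ] A).prod
          (((ContinuousLinearMap.id ℝ A).smulRight (g s)).prod
            (0 : A →L[ℝ] F × F × (V →L[ℝ] ℝ)))) (ξ s) :=
      (hasFDerivAt_const _ _).prodMk
        (((hasFDerivAt_id _).mul_const' (g s)).prodMk (hasFDerivAt_const _ _))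
    have h2 : fderiv ℝ (fun ξ' => Lf (g s, ξ' * g s, q s, deriv q s, a₀)) (ξ s)
        = (fderiv ℝ Lf (g s, ξ s * g s, q s, deriv q s, a₀)).comp
            ((0 : A →L[ℝ] A).prod
              (((ContinuousLinearMap.id ℝ A).smulRight (g s)).prod
                (0 : A →L[ℝ] F × F × (V →L[ℝ] ℝ)))) :=
      ((hNd _).comp _ hemb).fderiv
    rw [hξg s] at h2
    rw [h2, hmfun]
    simp [ContinuousLinearMap.comp_apply, ContinuousLinearMap.prod_apply,
      ContinuousLinearMap.smulRight_apply, smul_eq_mul, hE2app]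
    rfl
  -- per-time analysis of part (1)
  have part1 : ∀ t : ℝ,
      (deriv (fun s => fderiv ℝ (fun u => L (g s) u (q s) (deriv q s) a₀) (deriv g s)) t
        = fderiv ℝ (fun g' => L g' (deriv g t) (q t) (deriv q t) a₀) (g t))
      ↔ (∀ η : A,
        deriv (fun s => (fderiv ℝ (fun ξ' => l ξ' (q s) (deriv q s) (a s)) (ξ s)) η) t
          = -(fderiv ℝ (fun ξ' => l ξ' (q t) (deriv q t) (a t)) (ξ t)) (ξ t * η - η * ξ t)
            + (fderiv ℝ (fun a' => l (ξ t) (q t) (deriv q t) a') (a t)) ((a t).comp (R η))) := by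
    intro t
    -- derivative of the momentum curve
    have hmdt : HasDerivAt mfun (deriv mfun t) t := (hmC.differentiable one_ne_zero t).hasDerivAt
    -- keyB : the ξ'-derivative at identity in terms of the momentum
    have hfe1 : (fun ξ' => l ξ' (q t) (deriv q t) (a t))
        = fun ξ' => Lf (1, ξ', q t, deriv q t, a t) := funext fun ξ' => hl ξ' _ _ _
    have hemb1 : HasFDerivAt
        (fun ξ' : A => (((1:A), ξ', q t, deriv q t, a t) : A × A × F × F × (V →L[ℝ] ℝ)))
        E2 (ξ t) :=
      (hasFDerivAt_const _ _).prodMk ((hasFDerivAt_id _).prodMk (hasFDerivAt_const _ _))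
    have h3 : fderiv ℝ (fun ξ' => Lf (1, ξ', q t, deriv q t, a t)) (ξ t)
        = (fderiv ℝ Lf (1, ξ t, q t, deriv q t, a t)).comp E2 :=
      ((hNd _).comp _ hemb1).fderiv
    have keyB : ∀ ζ : A,
        fderiv ℝ Lf (1, ξ t, q t, deriv q t, a t) ((0, ζ, 0, 0, 0))
          = mfun t (ζ * g t) := by
      intro ζ
      have := keyXi t ζ
      rw [hfe1, h3] at this
      rw [← this]
      simp [hE2app]
    -- keyC : the g'-derivative of L_{a₀} at g t
    have keyC : ∀ δ : A,
        fderiv ℝ (fun g' => L g' (deriv g t) (q t) (deriv q t) a₀) (g t) δ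
          = fderiv ℝ Lf (1, ξ t, q t, deriv q t, a t)
              ((δ * Ring.inverse (g t), 0, 0, 0, 0)) := by
      intro δ
      have hfe3 : (fun g' => L g' (deriv g t) (q t) (deriv q t) a₀)
          = fun g' => Lf (g' * Ring.inverse (g t), ξ t, q t, deriv q t, a t) :=
        funext fun g' => hI3 t g'
      rw [hfe3]
      have hemb3 : HasFDerivAt
          (fun g' : A => ((g' * Ring.inverse (g t), ξ t, q t, deriv q t, a t) :
            A × A × F × F × (V →L[ℝ] ℝ)))
          (((ContinuousLinearMap.id ℝ A).smulRight (Ring.inverse (g t))).prod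
            (0 : A →L[ℝ] A × F × F × (V →L[ℝ] ℝ))) (g t) :=
        ((hasFDerivAt_id _).mul_const' _).prodMk (hasFDerivAt_const _ _)
      have h4 : fderiv ℝ (fun g' => Lf (g' * Ring.inverse (g t), ξ t, q t, deriv q t, a t)) (g t)
          = (fderiv ℝ Lf (g t * Ring.inverse (g t), ξ t, q t, deriv q t, a t)).comp
              (((ContinuousLinearMap.id ℝ A).smulRight (Ring.inverse (g t))).prod
                (0 : A →L[ℝ] A × F × F × (V →L[ℝ] ℝ))) :=
        ((hNd _).comp _ hemb3).fderiv
      rw [hig t] at h4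
      rw [h4]
      simp [ContinuousLinearMap.comp_apply, ContinuousLinearMap.prod_apply,
        ContinuousLinearMap.smulRight_apply, smul_eq_mul]
      rfl
    -- the a'-derivative of l at a t
    have keyA : ∀ w : V →L[ℝ] ℝ,
        fderiv ℝ (fun a' => l (ξ t) (q t) (deriv q t) a') (a t) w
          = fderiv ℝ Lf (1, ξ t, q t, deriv q t, a t) ((0, 0, 0, 0, w)) := by
      intro w
      have hfe : (fun a' => l (ξ t) (q t) (deriv q t) a')
          = fun a' => Lf (1, ξ t, q t, deriv q t, a') := funext fun a' => hl _ _ _ a'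
      rw [hfe]
      have hemb : HasFDerivAt
          (fun a' : (V →L[ℝ] ℝ) => (((1:A), ξ t, q t, deriv q t, a') :
            A × A × F × F × (V →L[ℝ] ℝ)))
          ((0 : (V →L[ℝ] ℝ) →L[ℝ] A).prod ((0 : (V →L[ℝ] ℝ) →L[ℝ] A).prod
            ((0 : (V →L[ℝ] ℝ) →L[ℝ] F).prod ((0 : (V →L[ℝ] ℝ) →L[ℝ] F).prod
              (ContinuousLinearMap.id ℝ (V →L[ℝ] ℝ)))))) (a t) :=
        (hasFDerivAt_const _ _).prodMk ((hasFDerivAt_const _ _).prodMk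
          ((hasFDerivAt_const _ _).prodMk ((hasFDerivAt_const _ _).prodMk (hasFDerivAt_id _))))
      have h9 : fderiv ℝ (fun a' => Lf (1, ξ t, q t, deriv q t, a')) (a t)
          = (fderiv ℝ Lf (1, ξ t, q t, deriv q t, a t)).comp
              ((0 : (V →L[ℝ] ℝ) →L[ℝ] A).prod ((0 : (V →L[ℝ] ℝ) →L[ℝ] A).prod
                ((0 : (V →L[ℝ] ℝ) →L[ℝ] F).prod ((0 : (V →L[ℝ] ℝ) →L[ℝ] F).prod
                  (ContinuousLinearMap.id ℝ (V →L[ℝ] ℝ)))))) :=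
        ((hNd _).comp _ hemb).fderiv
      rw [h9]
      simp [ContinuousLinearMap.comp_apply, ContinuousLinearMap.prod_apply]
    -- the infinitesimal invariance identity (†)
    have hdagger : ∀ η : A,
        fderiv ℝ Lf (1, ξ t, q t, deriv q t, a t)
          ((η, ξ t * η, 0, 0, -((a t).comp (R η)))) = 0 := by
      intro η
      -- the function Φ, constant on the open set of units
      have hev : (fun h : A => Lf (h, ξ t * h, q t, deriv q t,
            (a t).comp (R (Ring.inverse h))))
          =ᶠ[nhds (1:A)] fun _ => l (ξ t) (q t) (deriv q t) (a t) := by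
        filter_upwards [Units.isOpen.mem_nhds (by simp only [Set.mem_setOf_eq]; exact isUnit_one)] with h hh
        have h6 := hLinv 1 (ξ t) (q t) (deriv q t) (a t) hh.unit
        rw [one_mul, hh.unit_spec] at h6
        have h7 : (↑hh.unit⁻¹ : A) = Ring.inverse h := by
          have h0 := Ring.inverse_unit hh.unit
          rw [hh.unit_spec] at h0
          exact h0.symm
        rw [h7] at h6
        show L h (ξ t * h) (q t) (deriv q t) ((a t).comp (R (Ring.inverse h)))
          = l (ξ t) (q t) (deriv q t) (a t)
        rw [hl]
        exact h6
      have hΦ0 : HasFDerivAt (fun h : A => Lf (h, ξ t * h, q t, deriv q t,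
            (a t).comp (R (Ring.inverse h)))) 0 1 :=
        (hasFDerivAt_const (𝕜 := ℝ) (E := A) (l (ξ t) (q t) (deriv q t) (a t))
          (1 : A)).congr_of_eventuallyEq hev
      -- the chain-rule derivative of Φ at 1
      have hinv1 : HasFDerivAt (Ring.inverse : A → A)
          (-(ContinuousLinearMap.mulLeftRight ℝ A 1 1)) 1 := by
        have h5 := hasFDerivAt_ringInverse (𝕜 := ℝ) (1 : Aˣ)
        simpa using h5
      have hκ : HasFDerivAt (fun h : A => (a t).comp (R (Ring.inverse h)))
          ((((ContinuousLinearMap.compL ℝ V V ℝ) (a t)).comp R).comp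
            (-(ContinuousLinearMap.mulLeftRight ℝ A 1 1))) 1 :=
        ((((ContinuousLinearMap.compL ℝ V V ℝ) (a t)).comp R).hasFDerivAt).comp 1 hinv1
      have hembΦ : HasFDerivAt
          (fun h : A => ((h, ξ t * h, q t, deriv q t,
            (a t).comp (R (Ring.inverse h))) : A × A × F × F × (V →L[ℝ] ℝ)))
          ((ContinuousLinearMap.id ℝ A).prod
            ((ξ t • ContinuousLinearMap.id ℝ A).prod
              ((0 : A →L[ℝ] F).prod ((0 : A →L[ℝ] F).prod
                ((((ContinuousLinearMap.compL ℝ V V ℝ) (a t)).comp R).comp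
                  (-(ContinuousLinearMap.mulLeftRight ℝ A 1 1))))))) 1 :=
        (hasFDerivAt_id _).prodMk (((hasFDerivAt_id _).const_mul (ξ t)).prodMk
          ((hasFDerivAt_const _ _).prodMk ((hasFDerivAt_const _ _).prodMk hκ)))
      have hΦ1 := (hNd _).comp (1:A) hembΦ
      simp only [mul_one, Ring.inverse_one, hR1, ContinuousLinearMap.comp_id] at hΦ1
      have huniq := hΦ0.unique hΦ1
      have h12 := congrArg (fun T : A →L[ℝ] ℝ => T η) huniq
      simp only [ContinuousLinearMap.zero_apply, ContinuousLinearMap.comp_apply,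
        ContinuousLinearMap.prod_apply, ContinuousLinearMap.coe_id', id_eq,
        ContinuousLinearMap.smul_apply, smul_eq_mul, ContinuousLinearMap.neg_apply,
        ContinuousLinearMap.mulLeftRight_apply, one_mul, mul_one,
        ContinuousLinearMap.compL_apply, map_neg] at h12
      rw [← h12]
    -- now the algebraic reduction.  Abbreviate:
    set N1 : A × A × F × F × (V →L[ℝ] ℝ) →L[ℝ] ℝ :=
      fderiv ℝ Lf (1, ξ t, q t, deriv q t, a t) with hN1t
    -- EL₁ ↔ reduced form
    have hELred :
        (deriv (fun s => fderiv ℝ (fun u => L (g s) u (q s) (deriv q s) a₀) (deriv g s)) t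
          = fderiv ℝ (fun g' => L g' (deriv g t) (q t) (deriv q t) a₀) (g t))
        ↔ (∀ η : A, deriv mfun t (η * g t) = N1 ((η, 0, 0, 0, 0))) := by
      have hfm : (fun s => fderiv ℝ (fun u => L (g s) u (q s) (deriv q s) a₀) (deriv g s))
          = mfun := funext keyM
      rw [hfm]
      constructor
      · intro hEq η
        have h13 := keyC (η * g t)
        rw [mul_assoc, hig t, mul_one] at h13
        rw [hEq]
        exact h13
      · intro hAll
        apply ContinuousLinearMap.ext
        intro δ
        rw [keyC δ]
        have h8 := hAll (δ * Ring.inverse (g t))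
        rw [mul_assoc, hgi t, mul_one] at h8
        exact h8
    -- EP₁(η) ↔ reduced form
    have hEPred : ∀ η : A,
        (deriv (fun s => (fderiv ℝ (fun ξ' => l ξ' (q s) (deriv q s) (a s)) (ξ s)) η) t
          = -(fderiv ℝ (fun ξ' => l ξ' (q t) (deriv q t) (a t)) (ξ t)) (ξ t * η - η * ξ t)
            + (fderiv ℝ (fun a' => l (ξ t) (q t) (deriv q t) a') (a t)) ((a t).comp (R η)))
        ↔ (deriv mfun t (η * g t) = N1 ((η, 0, 0, 0, 0))) := by
      intro η
      -- LHS
      have hfunEq : (fun s => (fderiv ℝ (fun ξ' => l ξ' (q s) (deriv q s) (a s)) (ξ s)) η)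
          = fun s => mfun s (η * g s) := funext fun s => keyXi s η
      have hmul : HasDerivAt (fun s => η * g s) (η * deriv g t) t :=
        ((hgD t).hasDerivAt).const_mul η
      have hD := hmdt.clm_apply hmul
      have f1 : deriv (fun s => (fderiv ℝ (fun ξ' => l ξ' (q s) (deriv q s) (a s)) (ξ s)) η) t
          = deriv mfun t (η * g t) + mfun t (η * deriv g t) := by
        rw [hfunEq]; exact hD.deriv
      -- first RHS term
      have f2 : -(fderiv ℝ (fun ξ' => l ξ' (q t) (deriv q t) (a t)) (ξ t)) (ξ t * η - η * ξ t)
          = mfun t (η * deriv g t) - mfun t ((ξ t * η) * g t) := by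
        rw [keyXi t (ξ t * η - η * ξ t), sub_mul, map_sub]
        have h14 : (η * ξ t) * g t = η * deriv g t := by rw [mul_assoc, hξg t]
        rw [h14]
        ring
      -- second RHS term, via the invariance identity
      have f3 : (fderiv ℝ (fun a' => l (ξ t) (q t) (deriv q t) a') (a t)) ((a t).comp (R η))
          = N1 ((η, 0, 0, 0, 0)) + mfun t ((ξ t * η) * g t) := by
        rw [keyA ((a t).comp (R η))]
        have h11 := hdagger η
        have hsplit : ((η, ξ t * η, 0, 0, -((a t).comp (R η))) :
            A × A × F × F × (V →L[ℝ] ℝ))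
            = (η, 0, 0, 0, 0) + (0, ξ t * η, 0, 0, 0) - (0, 0, 0, 0, (a t).comp (R η)) := by
          simp [Prod.ext_iff]
        rw [hsplit, map_sub, map_add, sub_eq_zero] at h11
        rw [← h11, keyB (ξ t * η)]
      rw [f1, f2, f3]
      constructor
      · intro h; linarith
      · intro h; linarith
    exact hELred.trans (forall_congr' fun η => (hEPred η).symm)
  -- assemble
  apply forall_congr'
  intro t
  apply and_congr
  · exact part1 t
  · rw [hP2fun, hP2fun' t]
end
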